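/- Let m > 0 and let g : ℝ³ → ℂ be a Schwartz function. Then the second-order vacuum integrand V_g is integrable on ℝ³ × ℝ³ × ℝ³ (i.e. on ℝ⁹); that is, with the adiabatic cut-off g the second-order vacuum energy coefficient of the regularised φ³ theory on the noncommutative Minkowski space is ultraviolet finite. -/

import Mathlib

open MeasureTheory

/-- Euclidean three-space. -/
abbrev R3 := EuclideanSpace ℝ (Fin 3)

/-- The one-particle energy `ω(p) = √(‖p‖² + m²)` for `p ∈ ℝ³`. -/
noncomputable def ω3 (m : ℝ) (p : R3) : ℝ := Real.sqrt (‖p‖ ^ 2 + m ^ 2)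

/-- The second-order vacuum integrand `V_g(p₁,p₂,p₃)` of the regularised `φ³`
theory on the noncommutative Minkowski space, with adiabatic cut-off `g`. -/
noncomputable def V (m : ℝ) (g : R3 → ℂ) (p : R3 × R3 × R3) : ℝ :=
  ‖g ((3 : ℝ)⁻¹ • (p.1 + p.2.1 + p.2.2))‖ ^ 2 *
    (Real.exp (-‖p.1 - (3 : ℝ)⁻¹ • (p.1 + p.2.1 + p.2.2)‖ ^ 2 -
        (ω3 m p.1 - (ω3 m p.1 + ω3 m p.2.1 + ω3 m p.2.2) / 3) ^ 2) *
      Real.exp (-‖p.2.1 - (3 : ℝ)⁻¹ • (p.1 + p.2.1 + p.2.2)‖ ^ 2 -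
        (ω3 m p.2.1 - (ω3 m p.1 + ω3 m p.2.1 + ω3 m p.2.2) / 3) ^ 2) *
      Real.exp (-‖p.2.2 - (3 : ℝ)⁻¹ • (p.1 + p.2.1 + p.2.2)‖ ^ 2 -
        (ω3 m p.2.2 - (ω3 m p.1 + ω3 m p.2.1 + ω3 m p.2.2) / 3) ^ 2)) /
    ((ω3 m p.1 + ω3 m p.2.1 + ω3 m p.2.2) * (ω3 m p.1 * ω3 m p.2.1 * ω3 m p.2.2))

/-- The centre-of-mass change of variables `(u,v,w) ↦ (w+u, w+v, w-u-v)`. -/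
noncomputable def Tcm : (R3 × R3 × R3) ≃ₗ[ℝ] (R3 × R3 × R3) where
  toFun q := (q.2.2 + q.1, q.2.2 + q.2.1, q.2.2 - q.1 - q.2.1)
  invFun p := (p.1 - (3 : ℝ)⁻¹ • (p.1 + p.2.1 + p.2.2),
    p.2.1 - (3 : ℝ)⁻¹ • (p.1 + p.2.1 + p.2.2), (3 : ℝ)⁻¹ • (p.1 + p.2.1 + p.2.2))
  map_add' a b := by
    simp only [Prod.fst_add, Prod.snd_add, Prod.mk_add_mk, Prod.mk.injEq]
    refine ⟨by abel, by abel, by abel⟩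
  map_smul' c a := by
    simp only [Prod.smul_fst, Prod.smul_snd, Prod.smul_mk, RingHom.id_apply, Prod.mk.injEq]
    refine ⟨by module, by module, by module⟩
  left_inv q := by
    rw [Prod.ext_iff, Prod.ext_iff]
    refine ⟨by module, by module, by module⟩
  right_inv p := by
    rw [Prod.ext_iff, Prod.ext_iff]
    refine ⟨by module, by module, by module⟩

/-- Composing with a linear equivalence preserves integrability w.r.t. Haar measure. -/
lemma integrable_comp_linearEquiv {E F : Type*} [NormedAddCommGroup E] [NormedSpace ℝ E]
    [MeasurableSpace E] [BorelSpace E] [FiniteDimensional ℝ E] {μ : Measure E}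
    [μ.IsAddHaarMeasure] [NormedAddCommGroup F] (T : E ≃ₗ[ℝ] E) {f : E → F}
    (hf : Integrable f μ) : Integrable (fun x => f (T x)) μ := by
  let t : E ≃ᵐ E := T.toContinuousLinearEquiv.toHomeomorph.toMeasurableEquiv
  refine (integrable_map_equiv t f).mp ?_
  have hdet : LinearMap.det (T : E →ₗ[ℝ] E) ≠ 0 := (LinearEquiv.isUnit_det' T).ne_zero
  have hmap : Measure.map t μ = ENNReal.ofReal |(LinearMap.det (T : E →ₗ[ℝ] E))⁻¹| • μ :=
    Measure.map_linearMap_addHaar_eq_smul_addHaar μ hdet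
  rw [hmap]
  exact hf.smul_measure ENNReal.ofReal_ne_top

noncomputable instance : MeasureTheory.Measure.IsAddHaarMeasure (volume : Measure (R3 × R3)) :=
  MeasureTheory.Measure.prod.instIsAddHaarMeasure _ _

noncomputable instance : MeasureTheory.Measure.IsAddHaarMeasure (volume : Measure (R3 × R3 × R3)) :=
  MeasureTheory.Measure.prod.instIsAddHaarMeasure _ _

lemma integrable_gauss_R3 : Integrable (fun v : R3 => Real.exp (-‖v‖ ^ 2)) := by
  have h := (GaussianFourier.integrable_cexp_neg_mul_sq_norm_add (V := R3) (b := 1)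
    (by norm_num) 0 0).norm
  refine h.congr (Filter.Eventually.of_forall fun v => ?_)
  simp [Complex.norm_exp]
  rw [← Complex.ofReal_pow, Complex.ofReal_re]

theorem stmt16 (m : ℝ) (hm : 0 < m) (g : SchwartzMap R3 ℂ) :
    Integrable (V m g) := by
  obtain ⟨C, hCpos, hC⟩ := g.decay 0 0
  have hg : ∀ x : R3, ‖g x‖ ≤ C := fun x => by simpa using hC x
  have hC0 : (0 : ℝ) ≤ C := hCpos.le
  have hω : ∀ p : R3, m ≤ ω3 m p := by
    intro p
    rw [ω3]
    calc m = Real.sqrt (m ^ 2) := (Real.sqrt_sq hm.le).symm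
    _ ≤ Real.sqrt (‖p‖ ^ 2 + m ^ 2) := Real.sqrt_le_sqrt (by nlinarith [sq_nonneg ‖p‖])
  have hωpos : ∀ p : R3, 0 < ω3 m p := fun p => lt_of_lt_of_le hm (hω p)
  -- continuity of V
  have hcω : Continuous (ω3 m) := by
    unfold ω3; exact Real.continuous_sqrt.comp (by fun_prop)
  have hden : ∀ p : R3 × R3 × R3,
      (ω3 m p.1 + ω3 m p.2.1 + ω3 m p.2.2) * (ω3 m p.1 * ω3 m p.2.1 * ω3 m p.2.2) ≠ 0 := by
    intro p
    have h1 := hωpos p.1; have h2 := hωpos p.2.1; have h3 := hωpos p.2.2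
    exact (mul_pos (by linarith) (mul_pos (mul_pos h1 h2) h3)).ne'
  have hcV : Continuous (V m g) := by
    unfold V
    apply Continuous.div ?_ ?_ hden
    · have hgc : Continuous g := g.continuous
      fun_prop
    · fun_prop
  -- nonnegativity and pointwise bound after change of variables
  have hT : ∀ q : R3 × R3 × R3, Tcm q = (q.2.2 + q.1, q.2.2 + q.2.1, q.2.2 - q.1 - q.2.1) :=
    fun _ => rfl
  have hVnn : ∀ p : R3 × R3 × R3, 0 ≤ V m g p := by
    intro p; unfold V ω3; positivity
  have hDm : (0 : ℝ) < 3 * m ^ 4 := by positivity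
  have hbound : ∀ q : R3 × R3 × R3, ‖V m g (Tcm q)‖ ≤
      (C / (3 * m ^ 4)) * (Real.exp (-‖q.1‖ ^ 2) * (Real.exp (-‖q.2.1‖ ^ 2) * ‖g q.2.2‖)) := by
    rintro ⟨u, v, w⟩
    rw [Real.norm_eq_abs, abs_of_nonneg (hVnn _), hT]
    have hb : (3 : ℝ)⁻¹ • ((w + u) + (w + v) + (w - u - v)) = w := by module
    show V m g (w + u, w + v, w - u - v) ≤ _
    unfold V
    dsimp only
    rw [hb, add_sub_cancel_left, add_sub_cancel_left]
    set ω₁ := ω3 m (w + u); set ω₂ := ω3 m (w + v); set ω₃ := ω3 m (w - u - v)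
    have h1 := hω (w + u); have h2 := hω (w + v); have h3 := hω (w - u - v)
    have hp1 := hωpos (w + u); have hp2 := hωpos (w + v); have hp3 := hωpos (w - u - v)
    have hDen : 3 * m ^ 4 ≤ (ω₁ + ω₂ + ω₃) * (ω₁ * ω₂ * ω₃) := by
      have hA : 3 * m ≤ ω₁ + ω₂ + ω₃ := by linarith
      have hB : m ^ 3 ≤ ω₁ * ω₂ * ω₃ := by
        calc m ^ 3 = m * m * m := by ring
        _ ≤ ω₁ * ω₂ * ω₃ := by
          apply mul_le_mul _ h3 hm.le (by positivity)
          exact mul_le_mul h1 h2 hm.le hp1.le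
      calc 3 * m ^ 4 = (3 * m) * m ^ 3 := by ring
      _ ≤ (ω₁ + ω₂ + ω₃) * (ω₁ * ω₂ * ω₃) := by
        apply mul_le_mul hA hB (by positivity) (by linarith)
    have hNum : ‖g w‖ ^ 2 *
        (Real.exp (-‖u‖ ^ 2 - (ω₁ - (ω₁ + ω₂ + ω₃) / 3) ^ 2) *
          Real.exp (-‖v‖ ^ 2 - (ω₂ - (ω₁ + ω₂ + ω₃) / 3) ^ 2) *
          Real.exp (-‖w - u - v - w‖ ^ 2 - (ω₃ - (ω₁ + ω₂ + ω₃) / 3) ^ 2)) ≤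
        C * ‖g w‖ * (Real.exp (-‖u‖ ^ 2) * Real.exp (-‖v‖ ^ 2) * 1) := by
      apply mul_le_mul
      · calc ‖g w‖ ^ 2 = ‖g w‖ * ‖g w‖ := sq ‖g w‖
        _ ≤ C * ‖g w‖ := mul_le_mul_of_nonneg_right (hg w) (norm_nonneg _)
      · apply mul_le_mul
        · apply mul_le_mul
          · exact Real.exp_le_exp.mpr (by nlinarith [sq_nonneg (ω₁ - (ω₁ + ω₂ + ω₃) / 3)])
          · exact Real.exp_le_exp.mpr (by nlinarith [sq_nonneg (ω₂ - (ω₁ + ω₂ + ω₃) / 3)])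
          · positivity
          · positivity
        · rw [Real.exp_le_one_iff]
          nlinarith [sq_nonneg ‖w - u - v - w‖, sq_nonneg (ω₃ - (ω₁ + ω₂ + ω₃) / 3)]
        · positivity
        · positivity
      · positivity
      · positivity
    calc ‖g w‖ ^ 2 * _ / ((ω₁ + ω₂ + ω₃) * (ω₁ * ω₂ * ω₃)) ≤
        C * ‖g w‖ * (Real.exp (-‖u‖ ^ 2) * Real.exp (-‖v‖ ^ 2) * 1) / (3 * m ^ 4) :=
      div_le_div₀ (by positivity) hNum hDm hDen
    _ = (C / (3 * m ^ 4)) * (Real.exp (-‖u‖ ^ 2) * (Real.exp (-‖v‖ ^ 2) * ‖g w‖)) := by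
      ring
  -- integrability of the dominating function
  have hgn : Integrable (fun x : R3 => ‖g x‖) := g.integrable.norm
  have hprod : Integrable (fun q : R3 × R3 × R3 =>
      Real.exp (-‖q.1‖ ^ 2) * (Real.exp (-‖q.2.1‖ ^ 2) * ‖g q.2.2‖)) := by
    have h2 : Integrable (fun r : R3 × R3 => Real.exp (-‖r.1‖ ^ 2) * ‖g r.2‖) := by
      rw [show (volume : Measure (R3 × R3)) = Measure.prod volume volume from rfl]
      exact integrable_gauss_R3.mul_prod hgn
    rw [show (volume : Measure (R3 × R3 × R3)) = Measure.prod volume volume from rfl]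
    exact integrable_gauss_R3.mul_prod h2
  have h1 : Integrable (fun q : R3 × R3 × R3 => V m g (Tcm q)) := by
    refine (hprod.const_mul (C / (3 * m ^ 4))).mono' ?_ (Filter.Eventually.of_forall hbound)
    have hTc : Continuous fun q : R3 × R3 × R3 => Tcm q :=
      (Tcm : (R3 × R3 × R3) →ₗ[ℝ] (R3 × R3 × R3)).continuous_of_finiteDimensional
    exact (hcV.comp hTc).aestronglyMeasurable
  haveI : BorelSpace (R3 × R3 × R3) := by infer_instance
  have h2 := integrable_comp_linearEquiv Tcm.symm h1
  simpa only [LinearEquiv.apply_symm_apply] using h2
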